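/- Let Γ be a non-elementary hyperbolic group with finite generating set S and let (γ_n) be a sequence of distinct elements of Γ. Then there exists h ∈ Γ such that the sequence of translation lengths (l_S([γ_n, h]))_n is unbounded, where [γ,h] = γhγ⁻¹h⁻¹. -/

import Mathlib

namespace CT

variable {Γ : Type*} [Group Γ] [MetricSpace Γ]

/-- norm -/
noncomputable def nn (x : Γ) : ℝ := dist 1 x
/-- Gromov product based at 1 -/
noncomputable def gp (x y : Γ) : ℝ := (dist 1 x + dist 1 y - dist x y) / 2

section basic
variable (hinv : ∀ g x y : Γ, dist (g * x) (g * y) = dist x y)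
include hinv

lemma dist_eq (x y : Γ) : dist x y = nn (x⁻¹ * y) := by
  have h := hinv x 1 (x⁻¹ * y)
  unfold nn
  rw [mul_one, ← mul_assoc, mul_inv_cancel, one_mul] at h
  exact h

lemma nn_inv (x : Γ) : nn x⁻¹ = nn x := by
  have h := hinv x 1 x⁻¹
  unfold nn
  rw [mul_one, mul_inv_cancel] at h
  rw [← h, dist_comm]



lemma nn_mul (x y : Γ) : nn (x * y) ≤ nn x + nn y := by
  have h := dist_triangle (1:Γ) x (x*y)
  have h2 := hinv x 1 y
  rw [mul_one] at h2
  unfold nn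
  rw [← h2]
  exact h








omit hinv in
lemma nn_nonneg (x : Γ) : 0 ≤ nn x := dist_nonneg

omit hinv in
lemma nn_one : nn (1 : Γ) = 0 := by simp [nn]

omit hinv in
lemma gp_symm (x y : Γ) : gp x y = gp y x := by
  unfold gp; rw [dist_comm x y]; ring

omit hinv in
lemma gp_nonneg (x y : Γ) : 0 ≤ gp x y := by
  have := dist_triangle x (1:Γ) y
  have h1 : dist x 1 = dist 1 x := dist_comm _ _
  unfold gp; linarith

omit hinv in
lemma gp_le_left (x y : Γ) : gp x y ≤ nn x := by
  have := dist_triangle (1:Γ) x y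
  unfold gp nn; linarith

omit hinv in
lemma gp_le_right (x y : Γ) : gp x y ≤ nn y := by
  rw [gp_symm]; exact gp_le_left y x

omit hinv in
lemma gp_lip (x y z : Γ) : gp x y ≤ gp x z + dist z y := by
  have h1 := dist_triangle (1:Γ) z y
  have h2 := dist_triangle x y z
  have h3 : dist y z = dist z y := dist_comm _ _
  unfold gp; linarith

omit hinv in
lemma dist_formula (x y : Γ) : dist x y = nn x + nn y - 2 * gp x y := by
  unfold gp nn; ring

lemma nn_mul_eq (x y : Γ) : nn (x * y) = nn x + nn y - 2 * gp x⁻¹ y := by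
  have h1 : dist x⁻¹ y = nn (x * y) := by
    rw [dist_eq hinv]; simp
  have h2 : nn x⁻¹ = nn x := nn_inv hinv x
  have h3 := dist_formula (x := x⁻¹) (y := y)
  rw [h1, h2] at h3
  linarith

lemma gp_shift_ge (h x y : Γ) : gp x y - nn h ≤ gp (h * x) (h * y) := by
  have e1 : dist (h*x) (h*y) = dist x y := hinv h x y
  have e2 : dist 1 (h*x) = dist h⁻¹ x := by
    have := hinv h⁻¹ 1 (h*x)
    rw [mul_one, ← mul_assoc, inv_mul_cancel, one_mul] at this
    exact this.symm
  have e3 : dist 1 (h*y) = dist h⁻¹ y := by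
    have := hinv h⁻¹ 1 (h*y)
    rw [mul_one, ← mul_assoc, inv_mul_cancel, one_mul] at this
    exact this.symm
  have e4 : dist 1 x ≤ dist 1 h⁻¹ + dist h⁻¹ x := dist_triangle _ _ _
  have e5 : dist 1 y ≤ dist 1 h⁻¹ + dist h⁻¹ y := dist_triangle _ _ _
  have e6 : dist 1 h⁻¹ = nn h := nn_inv hinv h
  unfold gp nn
  rw [e1, e2, e3]
  unfold nn at e6
  linarith

lemma gp_shift_le (h x y : Γ) : gp (h * x) (h * y) ≤ gp x y + nn h := by
  have e1 : dist (h*x) (h*y) = dist x y := hinv h x y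
  have e2 : dist 1 (h*x) = dist h⁻¹ x := by
    have := hinv h⁻¹ 1 (h*x)
    rw [mul_one, ← mul_assoc, inv_mul_cancel, one_mul] at this
    exact this.symm
  have e3 : dist 1 (h*y) = dist h⁻¹ y := by
    have := hinv h⁻¹ 1 (h*y)
    rw [mul_one, ← mul_assoc, inv_mul_cancel, one_mul] at this
    exact this.symm
  have e4 : dist h⁻¹ x ≤ dist h⁻¹ 1 + dist 1 x := dist_triangle _ _ _
  have e5 : dist h⁻¹ y ≤ dist h⁻¹ 1 + dist 1 y := dist_triangle _ _ _
  have e6 : dist h⁻¹ 1 = nn h := by rw [dist_comm]; exact nn_inv hinv h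
  unfold gp nn
  rw [e1, e2, e3]
  unfold nn at e6
  linarith

end basic

section hyp
variable (δ : ℝ) (hhyp1 : ∀ x y z : Γ, min (gp x y) (gp y z) - δ ≤ gp x z)
include hhyp1

lemma hyp2 (hδ : 0 ≤ δ) (x y z t : Γ) :
    min (min (gp x y) (gp y z)) (gp z t) - 2*δ ≤ gp x t := by
  have h1 := hhyp1 x z t
  have h2 := hhyp1 x y z
  have : min (min (gp x y) (gp y z)) (gp z t) - δ ≤ min (gp x z) (gp z t) := by
    rcases le_total (gp x z) (gp z t) with h | h
    · rw [min_eq_left h]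
      calc min (min (gp x y) (gp y z)) (gp z t) - δ ≤ min (gp x y) (gp y z) - δ :=
            by have := min_le_left (min (gp x y) (gp y z)) (gp z t); linarith
        _ ≤ gp x z := h2
    · rw [min_eq_right h]
      have := min_le_right (min (gp x y) (gp y z)) (gp z t); linarith
  linarith

end hyp



section fin
variable [ProperSpace Γ]

lemma ball_finite (hdisc : ∀ x y : Γ, x ≠ y → 1 ≤ dist x y) (x : Γ) (R : ℝ) :
    {y : Γ | dist x y ≤ R}.Finite := by
  have hc : IsCompact (Metric.closedBall x R) := isCompact_closedBall x R
  have hcover : Metric.closedBall x R ⊆ ⋃ y : Γ, Metric.ball y (1/2) := by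
    intro z _
    exact Set.mem_iUnion.2 ⟨z, by simp [Metric.mem_ball]⟩
  obtain ⟨t, ht⟩ := hc.elim_finite_subcover (fun y : Γ => Metric.ball y (1/2))
    (fun y => Metric.isOpen_ball) hcover
  have hsub : {y : Γ | dist x y ≤ R} ⊆ ⋃ y ∈ t, Metric.ball y (1/2) := by
    intro z hz
    exact ht (by simpa [Metric.mem_closedBall, dist_comm] using hz)
  refine Set.Finite.subset (Set.Finite.biUnion t.finite_toSet (fun y _ => ?_)) hsub
  apply Set.Subsingleton.finite
  intro a ha b hb
  by_contra hne
  have h1 := hdisc a b hne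
  have da : dist a y < 1/2 := by simpa [Metric.mem_ball] using ha
  have db : dist b y < 1/2 := by simpa [Metric.mem_ball] using hb
  have h2 := dist_triangle a y b
  have h3 : dist y b = dist b y := dist_comm _ _
  linarith

lemma escape (hdisc : ∀ x y : Γ, x ≠ y → 1 ≤ dist x y) (γ : ℕ → Γ)
    (hinj : Function.Injective γ) (R : ℝ) : {n : ℕ | nn (γ n) ≤ R}.Finite := by
  have h := ball_finite hdisc (1 : Γ) R
  have : {n : ℕ | nn (γ n) ≤ R} = γ ⁻¹' {y : Γ | dist 1 y ≤ R} := rfl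
  rw [this]
  exact Set.Finite.preimage (Function.Injective.injOn hinj) h

end fin

lemma inf_fiber {α : Type*} {S : Set ℕ} (hS : S.Infinite) (f : ℕ → α) {T : Set α}
    (hrange : ∀ n ∈ S, f n ∈ T) (hT : T.Finite) :
    ∃ v, {n | n ∈ S ∧ f n = v}.Infinite := by
  by_contra hcon
  push_neg at hcon
  have : S ⊆ ⋃ v ∈ T, {n | n ∈ S ∧ f n = v} := by
    intro n hn
    exact Set.mem_biUnion (hrange n hn) ⟨hn, rfl⟩
  exact hS (Set.Finite.subset (Set.Finite.biUnion hT (fun v _ => hcon v)) this)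

section main
variable (hinv : ∀ g x y : Γ, dist (g * x) (g * y) = dist x y)
  (δ : ℝ) (hδ : 0 ≤ δ) (hhyp1 : ∀ x y z : Γ, min (gp x y) (gp y z) - δ ≤ gp x z)
include hinv hδ hhyp1

/-- power growth: if c is "cyclically reduced enough" then its powers grow linearly. -/
lemma pow_growth {c : Γ} {K : ℝ} (hK : gp c c⁻¹ ≤ K)
    (hc : 2*K + 2*δ + 1 ≤ nn c) :
    ∀ k : ℕ, (k : ℝ) * (nn c - 2*K - 2*δ) ≤ nn (c^k) := by
  have step : ∀ k : ℕ, nn (c^(k+1)) = nn (c^k) + nn c - 2 * gp ((c^k)⁻¹) c := by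
    intro k
    have e2 : dist ((c^k)⁻¹) c = nn (c^(k+1)) := by
      rw [dist_eq hinv]
      congr 1
      rw [inv_inv, ← pow_succ]
    have f2 := dist_formula (x := ((c^k)⁻¹ : Γ)) (y := c)
    rw [e2, nn_inv hinv] at f2
    linarith
  have hQ : ∀ k : ℕ, gp ((c^k)⁻¹) c ≤ K + δ := by
    intro k
    induction k with
    | zero =>
      have h0 : gp (((c^(0:ℕ))⁻¹ : Γ)) c = 0 := by
        have e : ((c^(0:ℕ))⁻¹ : Γ) = 1 := by simp
        rw [e]
        unfold gp
        simp [dist_comm]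
      rw [h0]; linarith [gp_nonneg c c⁻¹]
    | succ k ih =>
      have e1 : dist ((c^(k+1))⁻¹) c⁻¹ = nn (c^k) := by
        rw [dist_eq hinv]
        congr 1
        rw [inv_inv, pow_succ, mul_assoc]
        simp
      have f1 := dist_formula (x := ((c^(k+1))⁻¹ : Γ)) (y := c⁻¹)
      rw [e1, nn_inv hinv, nn_inv hinv] at f1
      have f2 := step k
      have hyp := hhyp1 c⁻¹ ((c^(k+1))⁻¹) c
      have hcc : gp c⁻¹ c ≤ K := by rw [gp_symm]; exact hK
      have hAval : gp c⁻¹ ((c^(k+1))⁻¹) = gp ((c^(k+1))⁻¹) c⁻¹ := gp_symm _ _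
      rcases le_or_gt (gp ((c^(k+1))⁻¹) c) (K + δ) with h | h
      · exact h
      · exfalso
        have hA : K + δ + 1 ≤ gp ((c^(k+1))⁻¹) c⁻¹ := by linarith
        rw [hAval] at hyp
        have hmin : K + δ < min (gp ((c^(k+1))⁻¹) c⁻¹) (gp ((c^(k+1))⁻¹) c) :=
          lt_min (by linarith) h
        linarith
  intro k
  induction k with
  | zero => simp [nn]
  | succ k ih =>
    have f2 := step k
    have hq := hQ k
    have : ((k:ℝ)+1) * (nn c - 2*K - 2*δ) ≤ nn (c^(k+1)) := by nlinarith
    push_cast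
    linarith

/-- lower bound for all conjugates -/
lemma conj_lower {c : Γ} {K : ℝ} (hK : gp c c⁻¹ ≤ K)
    (hc : 2*K + 2*δ + 1 ≤ nn c) (g : Γ) :
    nn c - 2*K - 2*δ ≤ dist g (c * g) := by
  have hd : dist g (c * g) = nn (g⁻¹ * c * g) := by
    rw [dist_eq hinv, ← mul_assoc]
  set Y := nn c - 2*K - 2*δ with hY
  have hY1 : 1 ≤ Y := by simp only [hY]; linarith
  rw [hd]
  by_contra hcon
  push_neg at hcon
  -- pick k with 2 * nn g < k * (Y - nn (g⁻¹ * c * g))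
  set ε := Y - nn (g⁻¹ * c * g) with hε
  have hεpos : 0 < ε := by simp only [hε]; linarith
  obtain ⟨k, hk⟩ := exists_nat_gt (2 * nn g / ε)
  have hkpos : 0 < (k:ℝ) := lt_of_le_of_lt (div_nonneg (by linarith [nn_nonneg (Γ:=Γ) g]) hεpos.le) hk
  have h1 : ∀ m : ℕ, nn ((g⁻¹ * c * g)^m) ≤ (m:ℝ) * nn (g⁻¹ * c * g) := by
    intro m
    induction m with
    | zero => simp [nn]
    | succ m ih =>
      have := nn_mul hinv ((g⁻¹ * c * g)^m) (g⁻¹ * c * g)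
      rw [← pow_succ] at this
      push_cast
      nlinarith [nn_nonneg (g⁻¹ * c * g)]
  have h2 : (g⁻¹ * c * g)^k = g⁻¹ * c^k * g := by
    have := conj_pow (a := g⁻¹) (b := c) (i := k)
    simpa [inv_inv] using this
  have h3 : nn (c^k) ≤ nn (g⁻¹ * c^k * g) + 2 * nn g := by
    have e : c^k = g * (g⁻¹ * c^k * g) * g⁻¹ := by group
    calc nn (c^k) = nn (g * (g⁻¹ * c^k * g) * g⁻¹) := by rw [← e]
      _ ≤ nn (g * (g⁻¹ * c^k * g)) + nn g⁻¹ := nn_mul hinv _ _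
      _ ≤ nn g + nn (g⁻¹ * c^k * g) + nn g⁻¹ := by linarith [nn_mul hinv g (g⁻¹ * c^k * g)]
      _ = nn (g⁻¹ * c^k * g) + 2 * nn g := by rw [nn_inv hinv]; ring
  have h4 := pow_growth hinv δ hδ hhyp1 hK hc k
  have h5 := h1 k
  rw [h2] at h5
  -- k*Y ≤ nn c^k ≤ nn(g⁻¹c^k g) + 2 nn g ≤ k * nn(g⁻¹cg) + 2 nn g
  have h6 : (k:ℝ) * Y ≤ (k:ℝ) * nn (g⁻¹ * c * g) + 2 * nn g := by linarith
  have h7 : (k:ℝ) * ε ≤ 2 * nn g := by simp only [hε]; nlinarith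
  rw [div_lt_iff₀ hεpos] at hk
  nlinarith

end main


section extract
variable [ProperSpace Γ]

lemma extraction
    (hinv : ∀ g x y : Γ, dist (g * x) (g * y) = dist x y)
    (hdisc : ∀ x y : Γ, x ≠ y → 1 ≤ dist x y)
    (hgeo : ∀ x y : Γ, ∃ (n : ℕ) (p : ℕ → Γ), (n : ℝ) = dist x y ∧ p 0 = x ∧ p n = y ∧
      ∀ i ≤ n, ∀ j ≤ n, dist (p i) (p j) = |(i : ℝ) - (j : ℝ)|)
    (γ : ℕ → Γ) (hinj : Function.Injective γ) :
    ∃ (φ : ℕ → ℕ) (r r' : ℕ → Γ),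
      (∀ i j : ℕ, dist (r i) (r j) = |(i:ℝ) - (j:ℝ)|) ∧
      (∀ i j : ℕ, dist (r' i) (r' j) = |(i:ℝ) - (j:ℝ)|) ∧
      (∀ i k : ℕ, i ≤ k → gp (r i) (γ (φ k)) = i) ∧
      (∀ i k : ℕ, i ≤ k → gp (r' i) ((γ (φ k))⁻¹) = i) ∧
      (∀ k : ℕ, (k:ℝ) ≤ nn (γ (φ k))) ∧ r 0 = 1 ∧ r' 0 = 1 := by
  classical
  choose len path hlen hp0 hpe hpd using fun n => hgeo 1 (γ n)
  choose ilen ipath hilen hip0 hipe hipd using fun n => hgeo 1 ((γ n)⁻¹)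
  -- norms
  have hnn : ∀ n, nn (γ n) = (len n : ℝ) := fun n => (hlen n).symm
  have hinn : ∀ n, nn (γ n) = (ilen n : ℝ) := by
    intro n
    rw [← nn_inv hinv (γ n)]
    exact (hilen n).symm
  set P : ℕ → Set ℕ → Prop := fun i s => s.Infinite ∧ (∀ n ∈ s, i ≤ len n ∧ i ≤ ilen n) ∧
    (∀ n ∈ s, ∀ m ∈ s, ∀ j, j ≤ i → path n j = path m j ∧ ipath n j = ipath m j) with hP
  have base : P 0 Set.univ := by
    refine ⟨Set.infinite_univ, fun n _ => ⟨Nat.zero_le _, Nat.zero_le _⟩, ?_⟩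
    intro n _ m _ j hj
    interval_cases j
    rw [hp0 n, hp0 m, hip0 n, hip0 m]
    exact ⟨rfl, rfl⟩
  have step : ∀ i : ℕ, ∀ s : Set ℕ, P i s → ∃ t : Set ℕ, P (i+1) t ∧ t ⊆ s := by
    intro i s hs
    set s1 : Set ℕ := {n | n ∈ s ∧ i+1 ≤ len n ∧ i+1 ≤ ilen n} with hs1
    have hbadfin : {n : ℕ | nn (γ n) ≤ (i:ℝ)}.Finite := escape hdisc γ hinj i
    have hs1inf : s1.Infinite := by
      apply Set.Infinite.mono (s := s \ {n : ℕ | nn (γ n) ≤ (i:ℝ)})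
      · intro n hn
        rcases hn with ⟨hns, hnb⟩
        simp only [Set.mem_setOf_eq, not_le] at hnb
        refine ⟨hns, ?_, ?_⟩
        · by_contra hcon
          push_neg at hcon
          have : len n ≤ i := by omega
          have : nn (γ n) ≤ (i:ℝ) := by
            rw [hnn n]; exact_mod_cast this
          linarith
        · by_contra hcon
          push_neg at hcon
          have : ilen n ≤ i := by omega
          have : nn (γ n) ≤ (i:ℝ) := by
            rw [hinn n]; exact_mod_cast this
          linarith
      · exact Set.Infinite.diff hs.1 hbadfin
    -- pigeonhole on the pair of prefix points
    have hrange : ∀ n ∈ s1, (path n (i+1), ipath n (i+1)) ∈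
        ({y : Γ | dist 1 y ≤ ((i:ℝ)+1)} ×ˢ {y : Γ | dist 1 y ≤ ((i:ℝ)+1)}) := by
      intro n hn
      rcases hn with ⟨_, h1, h2⟩
      constructor
      · show dist 1 (path n (i+1)) ≤ (i:ℝ)+1
        have := hpd n 0 (Nat.zero_le _) (i+1) h1
        rw [hp0 n] at this
        rw [this]
        rw [abs_of_nonpos (by push_cast; linarith)]
        push_cast; linarith
      · show dist 1 (ipath n (i+1)) ≤ (i:ℝ)+1
        have := hipd n 0 (Nat.zero_le _) (i+1) h2
        rw [hip0 n] at this
        rw [this]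
        rw [abs_of_nonpos (by push_cast; linarith)]
        push_cast; linarith
    have hTfin : ({y : Γ | dist 1 y ≤ ((i:ℝ)+1)} ×ˢ {y : Γ | dist 1 y ≤ ((i:ℝ)+1)}).Finite :=
      Set.Finite.prod (ball_finite hdisc 1 _) (ball_finite hdisc 1 _)
    obtain ⟨v, hv⟩ := inf_fiber hs1inf (fun n => (path n (i+1), ipath n (i+1))) hrange hTfin
    refine ⟨{n | n ∈ s1 ∧ (path n (i+1), ipath n (i+1)) = v}, ⟨hv, ?_, ?_⟩, ?_⟩
    · intro n hn
      exact hn.1.2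
    · intro n hn m hm j hj
      rcases Nat.lt_or_ge j (i+1) with hj' | hj'
      · exact hs.2.2 n hn.1.1 m hm.1.1 j (by omega)
      · have hji : j = i+1 := by omega
        subst hji
        have e1 := hn.2
        have e2 := hm.2
        rw [← e2] at e1
        exact ⟨congrArg Prod.fst e1, congrArg Prod.snd e1⟩
    · intro n hn
      exact hn.1.1
  choose stepf hstep1 hstep2 using step
  let T : (i : ℕ) → {s : Set ℕ // P i s} := fun i =>
    Nat.rec ⟨Set.univ, base⟩ (fun i prev => ⟨stepf i prev.1 prev.2, hstep1 i prev.1 prev.2⟩) i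
  have Tsucc : ∀ i, (T (i+1)).1 ⊆ (T i).1 := fun i => hstep2 i (T i).1 (T i).2
  have Tmono : ∀ i j, i ≤ j → (T j).1 ⊆ (T i).1 := by
    intro i j hij
    induction j with
    | zero =>
      have : i = 0 := by omega
      subst this; exact fun n hn => hn
    | succ j ih =>
      rcases Nat.lt_or_ge i (j+1) with h | h
      · exact fun n hn => ih (by omega) (Tsucc j hn)
      · have : i = j+1 := by omega
        subst this; exact fun n hn => hn
  have Tne : ∀ i, ((T i).1).Nonempty := fun i => Set.Infinite.nonempty (T i).2.1
  set φ : ℕ → ℕ := fun k => (Tne k).choose with hφdef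
  have hφ : ∀ k, φ k ∈ (T k).1 := fun k => (Tne k).choose_spec
  set r : ℕ → Γ := fun i => path (φ i) i with hrdef
  set r' : ℕ → Γ := fun i => ipath (φ i) i with hr'def
  -- agreement
  have hagree : ∀ i k, i ≤ k → path (φ k) i = r i ∧ ipath (φ k) i = r' i := by
    intro i k hik
    have h1 : φ k ∈ (T i).1 := Tmono i k hik (hφ k)
    have h2 : φ i ∈ (T i).1 := hφ i
    have := (T i).2.2.2 (φ k) h1 (φ i) h2 i le_rfl
    exact this
  have hlenk : ∀ k, k ≤ len (φ k) ∧ k ≤ ilen (φ k) := fun k => (T k).2.2.1 (φ k) (hφ k)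
  refine ⟨φ, r, r', ?_, ?_, ?_, ?_, ?_, ?_, ?_⟩
  · -- r geodesic
    intro i j
    rcases le_total i j with hij | hij
    · have e1 := (hagree i j hij).1
      have e2 : path (φ j) j = r j := by
        simp only [hrdef]
      rw [← e1, ← e2]
      exact hpd (φ j) i (le_trans hij (hlenk j).1) j (hlenk j).1
    · have e1 := (hagree j i hij).1
      have e2 : path (φ i) i = r i := by
        simp only [hrdef]
      rw [← e1, ← e2]
      exact hpd (φ i) i (hlenk i).1 j (le_trans hij (hlenk i).1)
  · intro i j
    rcases le_total i j with hij | hij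
    · have e1 := (hagree i j hij).2
      have e2 : ipath (φ j) j = r' j := by
        simp only [hr'def]
      rw [← e1, ← e2]
      exact hipd (φ j) i (le_trans hij (hlenk j).2) j (hlenk j).2
    · have e1 := (hagree j i hij).2
      have e2 : ipath (φ i) i = r' i := by
        simp only [hr'def]
      rw [← e1, ← e2]
      exact hipd (φ i) i (hlenk i).2 j (le_trans hij (hlenk i).2)
  · -- gromov product with prefix point, forward
    intro i k hik
    have e1 := (hagree i k hik).1
    set n := φ k
    have hiLen : i ≤ len n := le_trans hik (hlenk k).1
    have d1 : dist 1 (r i) = (i:ℝ) := by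
      rw [← e1]
      have := hpd n 0 (Nat.zero_le _) i hiLen
      rw [hp0 n] at this
      rw [this, abs_of_nonpos (by push_cast; linarith [Nat.cast_nonneg (α := ℝ) i])]
      push_cast; ring
    have d2 : dist 1 (γ n) = (len n : ℝ) := (hlen n).symm
    have d3 : dist (r i) (γ n) = (len n : ℝ) - i := by
      rw [← e1, ← hpe n]
      have := hpd n i hiLen (len n) le_rfl
      rw [this, abs_of_nonpos (by
        have : (i:ℝ) ≤ (len n : ℝ) := by exact_mod_cast hiLen
        linarith)]
      ring
    unfold gp
    rw [d1, d2, d3]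
    ring
  · intro i k hik
    have e1 := (hagree i k hik).2
    set n := φ k
    have hiLen : i ≤ ilen n := le_trans hik (hlenk k).2
    have d1 : dist 1 (r' i) = (i:ℝ) := by
      rw [← e1]
      have := hipd n 0 (Nat.zero_le _) i hiLen
      rw [hip0 n] at this
      rw [this, abs_of_nonpos (by push_cast; linarith [Nat.cast_nonneg (α := ℝ) i])]
      push_cast; ring
    have d2 : dist 1 ((γ n)⁻¹) = (ilen n : ℝ) := (hilen n).symm
    have d3 : dist (r' i) ((γ n)⁻¹) = (ilen n : ℝ) - i := by
      rw [← e1, ← hipe n]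
      have := hipd n i hiLen (ilen n) le_rfl
      rw [this, abs_of_nonpos (by
        have : (i:ℝ) ≤ (ilen n : ℝ) := by exact_mod_cast hiLen
        linarith)]
      ring
    unfold gp
    rw [d1, d2, d3]
    ring
  · intro k
    rw [hnn (φ k)]
    exact_mod_cast (hlenk k).1
  · simp only [hrdef]
    exact hp0 (φ 0)
  · simp only [hr'def]
    exact hip0 (φ 0)

end extract


section stab
variable (hinv : ∀ g x y : Γ, dist (g * x) (g * y) = dist x y)
  (δ : ℝ) (hδ : 0 ≤ δ) (hhyp1 : ∀ x y z : Γ, min (gp x y) (gp y z) - δ ≤ gp x z)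

/-- "h fixes the limit of b" -/
def Sp (b : ℕ → Γ) (h : Γ) : Prop :=
  ∀ K : ℝ, ∃ N : ℕ, ∀ k l : ℕ, N ≤ k → N ≤ l → K ≤ gp (h * b k) (b l)

include hinv hδ hhyp1

lemma Sp_mul {b : ℕ → Γ} {h₁ h₂ : Γ} (H1 : Sp b h₁) (H2 : Sp b h₂) : Sp b (h₁ * h₂) := by
  intro K
  obtain ⟨N₁, hN₁⟩ := H1 (K + δ)
  obtain ⟨N₂, hN₂⟩ := H2 (K + δ + nn h₁)
  set m := max N₁ N₂ with hm
  refine ⟨m, fun k l hk hl => ?_⟩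
  have c1 : K + δ + nn h₁ ≤ gp (h₂ * b k) (b m) :=
    hN₂ k m (le_trans (le_max_right _ _) hk) (le_max_right _ _)
  have c2 : K + δ ≤ gp (h₁ * b m) (b l) :=
    hN₁ m l (le_max_left _ _) (le_trans (le_max_left _ _) hl)
  have c3 := gp_shift_ge hinv h₁ (h₂ * b k) (b m)
  have c4 := hhyp1 (h₁ * (h₂ * b k)) (h₁ * b m) (b l)
  have c5 : K + δ ≤ min (gp (h₁ * (h₂ * b k)) (h₁ * b m)) (gp (h₁ * b m) (b l)) :=
    le_min (by linarith) c2
  have : h₁ * h₂ * b k = h₁ * (h₂ * b k) := by rw [mul_assoc]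
  rw [this]
  linarith

lemma Sp_inv {b : ℕ → Γ} {h : Γ} (H : Sp b h) : Sp b h⁻¹ := by
  intro K
  obtain ⟨N, hN⟩ := H (K + nn h)
  refine ⟨N, fun k l hk hl => ?_⟩
  have c1 : K + nn h ≤ gp (h * b l) (b k) := hN l k hl hk
  have c2 := gp_shift_le hinv h (h⁻¹ * b k) (b l)
  have e : h * (h⁻¹ * b k) = b k := by group
  rw [e] at c2
  have c3 : gp (b k) (h * b l) = gp (h * b l) (b k) := gp_symm _ _
  have c4 : gp (h⁻¹ * b k) (b l) = gp (b l) (h⁻¹ * b k) := gp_symm _ _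
  -- c2 : gp (b k) (h * b l) ≤ gp (h⁻¹ * b k) (b l) + nn h ... careful
  -- gp_shift_le h X Y : gp (h*X) (h*Y) ≤ gp X Y + nn h with X = h⁻¹ * b k, Y = b l
  -- gives gp (b k) (h * b l) ≤ gp (h⁻¹ * b k) (b l) + nn h
  linarith [c2, c3 ▸ c1]

lemma not_Sp {b : ℕ → Γ} (hq : ∀ k l : ℕ, min (k:ℝ) (l:ℝ) - δ ≤ gp (b k) (b l))
    {h : Γ} (H : ¬ Sp b h) :
    ∃ (K : ℝ) (N : ℕ), 0 ≤ K ∧ ∀ k l : ℕ, N ≤ k → N ≤ l → gp (h * b k) (b l) ≤ K := by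
  unfold Sp at H
  push_neg at H
  obtain ⟨K₀, hK₀⟩ := H
  set K := max K₀ 0 with hK
  set N₀ := ⌈K + 3*δ + nn h + 1⌉₊ with hN₀
  have hN₀R : K + 3*δ + nn h + 1 ≤ (N₀:ℝ) := Nat.le_ceil _
  obtain ⟨k₀, l₀, hk₀, hl₀, hbad⟩ := hK₀ N₀
  have hbad' : gp (h * b k₀) (b l₀) < K := lt_of_lt_of_le hbad (le_max_left _ _)
  refine ⟨K + 2*δ, N₀, by positivity, fun k l hk hl => ?_⟩
  by_contra hcon
  push_neg at hcon
  have c1 : gp (h * b k₀) (h * b k) ≥ min (k₀:ℝ) (k:ℝ) - δ - nn h := by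
    have := gp_shift_ge hinv h (b k₀) (b k)
    have := hq k₀ k
    linarith
  have c2 : gp (b l) (b l₀) ≥ min (l:ℝ) (l₀:ℝ) - δ := hq l l₀
  have hNk : (N₀:ℝ) ≤ min (k₀:ℝ) (k:ℝ) := le_min (by exact_mod_cast hk₀) (by exact_mod_cast hk)
  have hNl : (N₀:ℝ) ≤ min (l:ℝ) (l₀:ℝ) := le_min (by exact_mod_cast hl) (by exact_mod_cast hl₀)
  have chain := hyp2 δ hhyp1 hδ (h * b k₀) (h * b k) (b l) (b l₀)
  have hnh : 0 ≤ nn h := nn_nonneg h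
  have hmin : K + 2*δ < min (min (gp (h * b k₀) (h * b k)) (gp (h * b k) (b l))) (gp (b l) (b l₀)) := by
    apply lt_min
    apply lt_min
    · linarith
    · exact hcon
    · linarith
  linarith

/-- The main estimate: if h moves both limit points of b, commutators with b k have
large translation length. -/
lemma estimateE (b : ℕ → Γ) (hblen : ∀ k : ℕ, (k:ℝ) ≤ nn (b k))
    (h : Γ) (K : ℝ) (hK0 : 0 ≤ K) (N : ℕ)
    (hKp : ∀ k : ℕ, N ≤ k → gp (h * b k) (b k) ≤ K)
    (hKm : ∀ k : ℕ, N ≤ k → gp (h * (b k)⁻¹) ((b k)⁻¹) ≤ K)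
    (M : ℝ) :
    ∃ k : ℕ, M ≤ ⨅ g : Γ, dist g ((b k * h * (b k)⁻¹ * h⁻¹) * g) := by
  haveI : Nonempty Γ := ⟨1⟩
  set H := nn h with hH
  have hH0 : 0 ≤ H := nn_nonneg h
  set R : ℝ := |M| + 4*K + 8*H + 8*δ + 4 with hR
  set k := max N ⌈R⌉₊ with hk
  have hkN : N ≤ k := le_max_left _ _
  have hkR : R ≤ (k:ℝ) := le_trans (Nat.le_ceil R) (by exact_mod_cast le_max_right N ⌈R⌉₊)
  set x := b k with hx
  set A := nn x with hA
  have hAk : (k:ℝ) ≤ A := hblen k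
  have hAR : R ≤ A := le_trans hkR hAk
  have hMabs : M ≤ |M| := le_abs_self M
  -- basic norms
  have hnx : nn x⁻¹ = A := by rw [nn_inv hinv]
  set c : Γ := x * (h * x⁻¹ * h⁻¹) with hc
  set c' : Γ := x * (h⁻¹ * x⁻¹ * h) with hc'
  -- e1
  have e1 : gp x⁻¹ (h * x⁻¹ * h⁻¹) ≤ K + H := by
    have l1 : gp x⁻¹ (h * x⁻¹ * h⁻¹) ≤ gp x⁻¹ (h * x⁻¹) + dist (h * x⁻¹) (h * x⁻¹ * h⁻¹) :=
      gp_lip x⁻¹ (h * x⁻¹ * h⁻¹) (h * x⁻¹)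
    have l2 : dist (h * x⁻¹) (h * x⁻¹ * h⁻¹) = H := by
      rw [dist_eq hinv]
      have : (h * x⁻¹)⁻¹ * (h * x⁻¹ * h⁻¹) = h⁻¹ := by group
      rw [this, nn_inv hinv]
    have l3 : gp x⁻¹ (h * x⁻¹) ≤ K := by
      rw [gp_symm]
      exact hKm k hkN
    linarith
  -- e2
  have e2a : A - 2*H ≤ nn (h * x⁻¹ * h⁻¹) := by
    have l1 : x⁻¹ = h⁻¹ * (h * x⁻¹ * h⁻¹) * h := by group
    have l2 : nn (h⁻¹ * (h * x⁻¹ * h⁻¹) * h) ≤ nn (h⁻¹ * (h * x⁻¹ * h⁻¹)) + nn h :=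
      nn_mul hinv _ _
    have l3 : nn (h⁻¹ * (h * x⁻¹ * h⁻¹)) ≤ nn h⁻¹ + nn (h * x⁻¹ * h⁻¹) := nn_mul hinv _ _
    rw [nn_inv hinv] at l3
    have : nn x⁻¹ ≤ nn (h * x⁻¹ * h⁻¹) + 2*H := by
      conv_lhs => rw [l1]
      linarith
    linarith [hnx ▸ this]
  have e2b : nn (h * x⁻¹ * h⁻¹) ≤ A + 2*H := by
    have l2 : nn (h * x⁻¹ * h⁻¹) ≤ nn (h * x⁻¹) + nn h⁻¹ := nn_mul hinv _ _
    have l3 : nn (h * x⁻¹) ≤ nn h + nn x⁻¹ := nn_mul hinv _ _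
    rw [nn_inv hinv] at l2
    rw [hnx] at l3
    linarith
  -- e3
  have e3 : 2*A - 2*K - 4*H ≤ nn c := by
    have l1 := nn_mul_eq hinv x (h * x⁻¹ * h⁻¹)
    rw [← hc] at l1
    linarith
  -- e4 and e5
  have e4 : dist x c ≤ A + 2*H := by
    rw [dist_eq hinv]
    have : x⁻¹ * c = h * x⁻¹ * h⁻¹ := by rw [hc]; group
    rw [this]
    exact e2b
  have e5 : A - K - 3*H ≤ gp c x := by
    have l1 := dist_formula c x
    have l2 : dist c x = dist x c := dist_comm _ _
    have l3 : gp c x = (nn c + A - dist x c)/2 := by rw [← l2] at *; linarith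
    rw [l3]
    linarith
  -- primed versions
  have e1' : gp x⁻¹ (h⁻¹ * x⁻¹ * h) ≤ K + 2*H := by
    have l1 : gp x⁻¹ (h⁻¹ * x⁻¹ * h) ≤ gp x⁻¹ (h⁻¹ * x⁻¹) + dist (h⁻¹ * x⁻¹) (h⁻¹ * x⁻¹ * h) :=
      gp_lip _ _ _
    have l2 : dist (h⁻¹ * x⁻¹) (h⁻¹ * x⁻¹ * h) = H := by
      rw [dist_eq hinv]
      have : (h⁻¹ * x⁻¹)⁻¹ * (h⁻¹ * x⁻¹ * h) = h := by group
      rw [this]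
    have l3 : gp x⁻¹ (h⁻¹ * x⁻¹) ≤ K + H := by
      have s1 := gp_shift_ge hinv h x⁻¹ (h⁻¹ * x⁻¹)
      have s2 : h * (h⁻¹ * x⁻¹) = x⁻¹ := by group
      rw [s2] at s1
      have s3 : gp (h * x⁻¹) x⁻¹ ≤ K := hKm k hkN
      linarith
    linarith
  have e2a' : A - 2*H ≤ nn (h⁻¹ * x⁻¹ * h) := by
    have l1 : x⁻¹ = h * (h⁻¹ * x⁻¹ * h) * h⁻¹ := by group
    have l2 : nn (h * (h⁻¹ * x⁻¹ * h) * h⁻¹) ≤ nn (h * (h⁻¹ * x⁻¹ * h)) + nn h⁻¹ :=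
      nn_mul hinv _ _
    have l3 : nn (h * (h⁻¹ * x⁻¹ * h)) ≤ nn h + nn (h⁻¹ * x⁻¹ * h) := nn_mul hinv _ _
    rw [nn_inv hinv] at l2
    have : nn x⁻¹ ≤ nn (h⁻¹ * x⁻¹ * h) + 2*H := by
      conv_lhs => rw [l1]
      linarith
    linarith [hnx ▸ this]
  have e2b' : nn (h⁻¹ * x⁻¹ * h) ≤ A + 2*H := by
    have l2 : nn (h⁻¹ * x⁻¹ * h) ≤ nn (h⁻¹ * x⁻¹) + nn h := nn_mul hinv _ _
    have l3 : nn (h⁻¹ * x⁻¹) ≤ nn h⁻¹ + nn x⁻¹ := nn_mul hinv _ _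
    rw [nn_inv hinv] at l3
    rw [hnx] at l3
    linarith
  have e3' : 2*A - 2*K - 6*H ≤ nn c' := by
    have l1 := nn_mul_eq hinv x (h⁻¹ * x⁻¹ * h)
    rw [← hc'] at l1
    linarith
  have e4' : dist x c' ≤ A + 2*H := by
    rw [dist_eq hinv]
    have : x⁻¹ * c' = h⁻¹ * x⁻¹ * h := by rw [hc']; group
    rw [this]
    exact e2b'
  have e5' : A - K - 4*H ≤ gp c' x := by
    have l1 := dist_formula c' x
    have l2 : dist c' x = dist x c' := dist_comm _ _
    have l3 : gp c' x = (nn c' + A - dist x c')/2 := by rw [← l2] at *; linarith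
    rw [l3]
    linarith
  -- e6/e7 : gp c⁻¹ (h*x) is large
  have e6 : c⁻¹ = h * (c' * h⁻¹) := by
    rw [hc, hc']; group
  have e7 : A - K - 6*H ≤ gp c⁻¹ (h * x) := by
    have s1 := gp_shift_ge hinv h (c' * h⁻¹) x
    rw [← e6] at s1
    have s2 : gp x c' ≤ gp x (c' * h⁻¹) + dist (c' * h⁻¹) c' := gp_lip _ _ _
    have s3 : dist (c' * h⁻¹) c' = H := by
      rw [dist_eq hinv]
      have : (c' * h⁻¹)⁻¹ * c' = h := by group
      rw [this]
    have s4 : gp x c' = gp c' x := gp_symm _ _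
    have s5 : gp (c' * h⁻¹) x = gp x (c' * h⁻¹) := gp_symm _ _
    linarith
  -- e9 : gp c c⁻¹ ≤ K + 2δ
  have e8 : gp (h * x) x ≤ K := hKp k hkN
  have e9 : gp c c⁻¹ ≤ K + 2*δ := by
    by_contra hcon
    push_neg at hcon
    have chain := hyp2 δ hhyp1 hδ x c c⁻¹ (h * x)
    have b1 : K + 2*δ < gp x c := by
      have : gp x c = gp c x := gp_symm _ _
      rw [this]
      -- A - K - 3H > K + 2δ since A ≥ R
      have : K + 2*δ + 1 ≤ A - K - 3*H := by
        simp only [hR] at hAR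
        linarith [abs_nonneg M]
      linarith
    have b2 : K + 2*δ < gp c⁻¹ (h * x) := by
      have : K + 2*δ + 1 ≤ A - K - 6*H := by
        simp only [hR] at hAR
        linarith [abs_nonneg M]
      linarith
    have hmin : K + 2*δ < min (min (gp x c) (gp c c⁻¹)) (gp c⁻¹ (h * x)) :=
      lt_min (lt_min b1 hcon) b2
    have : gp x (h * x) = gp (h * x) x := gp_symm _ _
    linarith
  -- e10 : apply conj_lower
  have e10 : 2*(K + 2*δ) + 2*δ + 1 ≤ nn c := by
    simp only [hR] at hAR
    linarith [abs_nonneg M]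
  have e11 := fun g => conj_lower hinv δ hδ hhyp1 e9 e10 g
  have e12 : M ≤ nn c - 2*(K+2*δ) - 2*δ := by
    simp only [hR] at hAR
    linarith
  refine ⟨k, ?_⟩
  have egoal : (b k * h * (b k)⁻¹ * h⁻¹) = c := by
    rw [hc, ← hx]; group
  rw [egoal]
  exact le_ciInf (fun g => le_trans e12 (e11 g))

end stab


section free

lemma addRight_pow (k : ℕ) (z : ℤ) : ((Equiv.addRight (1:ℤ))^k) z = z + k := by
  induction k generalizing z with
  | zero => simp
  | succ k ih =>
    rw [pow_succ]
    have h2 : ((Equiv.addRight (1:ℤ))^k * Equiv.addRight (1:ℤ)) z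
        = ((Equiv.addRight (1:ℤ))^k) (Equiv.addRight (1:ℤ) z) := rfl
    rw [h2]
    simp only [Equiv.coe_addRight]
    rw [ih (z+1)]
    push_cast
    ring

lemma addRight_pow_inv (k : ℕ) (z : ℤ) : (((Equiv.addRight (1:ℤ))^k)⁻¹) z = z - k := by
  have h : ((Equiv.addRight (1:ℤ))^k) (z - k) = z := by
    rw [addRight_pow]; ring
  conv_lhs => rw [← h]
  exact Equiv.symm_apply_apply _ _

lemma free_family_ne {Γ : Type*} [Group Γ] (u v : Γ)
    (hfree : ∀ w : FreeGroup Bool, w ≠ 1 → FreeGroup.lift (fun c => if c then u else v) w ≠ 1)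
    {n m : ℕ} (hnm : n ≠ m) :
    v^(2*n) * u * (v^(2*n))⁻¹ ≠ v^(2*m) * u * (v^(2*m))⁻¹ := by
  classical
  set a : FreeGroup Bool := FreeGroup.of true with ha
  set bb : FreeGroup Bool := FreeGroup.of false with hbb
  set w : ℕ → FreeGroup Bool := fun n => bb^(2*n) * a * (bb^(2*n))⁻¹ with hw
  set ψ : Bool → Equiv.Perm ℤ := fun c => if c then Equiv.swap 0 1 else Equiv.addRight 1 with hψ
  have hπeval : ∀ q p : ℕ, (FreeGroup.lift ψ (w q)) (2*p:ℤ)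
      = ((Equiv.addRight (1:ℤ))^(2*q)) ((Equiv.swap 0 1) ((2*p:ℤ) - 2*q)) := by
    intro q p
    have e1 : FreeGroup.lift ψ (w q)
        = ((Equiv.addRight (1:ℤ))^(2*q)) * (Equiv.swap 0 1) * (((Equiv.addRight (1:ℤ))^(2*q))⁻¹) := by
      simp only [hw, map_mul, map_pow, map_inv, FreeGroup.lift_apply_of, ha, hbb, hψ]
      simp
    rw [e1]
    simp only [Equiv.Perm.mul_apply]
    rw [addRight_pow_inv]
    push_cast
    ring_nf
  have hwne : w n ≠ w m := by
    intro hcon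
    have h1 := hπeval n n
    have h2 := hπeval m n
    rw [hcon] at h1
    rw [h1] at h2
    have s1 : (Equiv.swap (0:ℤ) 1) ((2*n:ℤ) - 2*n) = 1 := by
      norm_num
    have s2 : (Equiv.swap (0:ℤ) 1) ((2*n:ℤ) - 2*m) = (2*n:ℤ) - 2*m := by
      apply Equiv.swap_apply_of_ne_of_ne
      · intro hcon2
        apply hnm
        omega
      · intro hcon2
        omega
    rw [s1, s2, addRight_pow, addRight_pow] at h2
    omega
  intro heq
  apply hfree (w n * (w m)⁻¹)
  · intro hcon
    exact hwne (by rwa [mul_inv_eq_one] at hcon)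
  · have hl : ∀ q : ℕ, FreeGroup.lift (fun c => if c then u else v) (w q)
        = v^(2*q) * u * (v^(2*q))⁻¹ := by
      intro q
      simp only [hw, map_mul, map_pow, map_inv, FreeGroup.lift_apply_of, ha, hbb]
      simp
    rw [map_mul, map_inv, hl n, hl m, ← heq]
    group

end free


section caseF
variable [ProperSpace Γ]

lemma caseF
    (hinv : ∀ g x y : Γ, dist (g * x) (g * y) = dist x y)
    (hdisc : ∀ x y : Γ, x ≠ y → 1 ≤ dist x y)
    (δ : ℝ) (hδ : 0 ≤ δ) (hhyp1 : ∀ x y z : Γ, min (gp x y) (gp y z) - δ ≤ gp x z)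
    (hgeo : ∀ x y : Γ, ∃ (n : ℕ) (p : ℕ → Γ), (n : ℝ) = dist x y ∧ p 0 = x ∧ p n = y ∧
      ∀ i ≤ n, ∀ j ≤ n, dist (p i) (p j) = |(i : ℝ) - (j : ℝ)|)
    (u v : Γ)
    (hfree : ∀ w : FreeGroup Bool, w ≠ 1 → FreeGroup.lift (fun c => if c then u else v) w ≠ 1)
    (b r : ℕ → Γ) (hr0 : r 0 = 1)
    (hrd : ∀ i j : ℕ, dist (r i) (r j) = |(i:ℝ) - (j:ℝ)|)
    (hra : ∀ i k : ℕ, i ≤ k → gp (r i) (b k) = i)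
    (hall : ∀ h : Γ, Sp b h) : False := by
  classical
  -- norms along the ray
  have hnr : ∀ i : ℕ, nn (r i) = i := by
    intro i
    unfold nn
    rw [← hr0, hrd 0 i, abs_of_nonpos (by push_cast; linarith [Nat.cast_nonneg (α := ℝ) i])]
    push_cast; ring
  have hgpr : ∀ i j : ℕ, j ≤ i → gp (r i) (r j) = j := by
    intro i j hji
    unfold gp
    have e1 : dist 1 (r i) = (i:ℝ) := hnr i
    have e2 : dist 1 (r j) = (j:ℝ) := hnr j
    have e3 : dist (r i) (r j) = (i:ℝ) - j := by
      rw [hrd i j, abs_of_nonneg (by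
        have : (j:ℝ) ≤ i := by exact_mod_cast hji
        linarith)]
    rw [e1, e2, e3]; ring
  -- transfer of the fixing property to the ray
  have htr : ∀ (h : Γ) (j : ℕ), ∃ L0 : ℕ, ∀ L : ℕ, L0 ≤ L →
      (j:ℝ) - 2*δ ≤ gp (h * r L) (r j) := by
    intro h j
    obtain ⟨N, hN⟩ := hall h (j:ℝ)
    refine ⟨j + ⌈nn h⌉₊, fun L hL => ?_⟩
    set k := max N L with hk
    set l := max N j with hl
    have c1 : gp (h * r L) (h * b k) ≥ (L:ℝ) - nn h := by
      have s1 := gp_shift_ge hinv h (r L) (b k)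
      rw [hra L k (le_max_right _ _)] at s1
      linarith
    have c2 : (j:ℝ) ≤ gp (h * b k) (b l) := hN k l (le_max_left _ _) (le_max_left _ _)
    have c3 : gp (b l) (r j) = j := by
      rw [gp_symm]; exact hra j l (le_max_right _ _)
    have chain := hyp2 δ hhyp1 hδ (h * r L) (h * b k) (b l) (r j)
    have hLj : (j:ℝ) ≤ (L:ℝ) - nn h := by
      have h1 : ((j + ⌈nn h⌉₊ : ℕ):ℝ) ≤ L := by exact_mod_cast hL
      have h2 : nn h ≤ (⌈nn h⌉₊:ℝ) := Nat.le_ceil _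
      push_cast at h1
      linarith
    have hmin : (j:ℝ) ≤ min (min (gp (h * r L) (h * b k)) (gp (h * b k) (b l))) (gp (b l) (r j)) := by
      apply le_min
      apply le_min
      · linarith
      · exact c2
      · rw [c3]
    linarith
  -- integer-valued norms
  have hmex : ∀ x : Γ, ∃ m : ℕ, (m:ℝ) = nn x := by
    intro x
    obtain ⟨n, p, h1, -⟩ := hgeo 1 x
    exact ⟨n, h1⟩
  choose mfun hmfun using hmex
  set mi : Γ → ℕ → ℕ := fun h i => mfun (h * r i) with hmi
  have hmival : ∀ h i, ((mi h i : ℕ):ℝ) = nn (h * r i) := fun h i => hmfun (h * r i)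
  -- monotone drift
  have hmono : ∀ (h : Γ) (i L : ℕ), i ≤ L → (mi h L : ℝ) - L ≤ (mi h i : ℝ) - i := by
    intro h i L hiL
    have t1 : dist 1 (h * r L) ≤ dist 1 (h * r i) + dist (h * r i) (h * r L) := dist_triangle _ _ _
    have t2 : dist (h * r i) (h * r L) = (L:ℝ) - i := by
      rw [hinv h (r i) (r L), hrd i L, abs_of_nonpos (by
        have : (i:ℝ) ≤ L := by exact_mod_cast hiL
        linarith)]
      ring
    have t3 := hmival h i
    have t4 := hmival h L
    unfold nn at t3 t4
    linarith
  have hlb : ∀ (h : Γ) (i : ℕ), (i:ℝ) - nn h ≤ (mi h i : ℝ) := by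
    intro h i
    have e : r i = h⁻¹ * (h * r i) := by group
    have t1 : nn (r i) ≤ nn h⁻¹ + nn (h * r i) := by
      conv_lhs => rw [e]
      exact nn_mul hinv _ _
    rw [nn_inv hinv, hnr i, ← hmival h i] at t1
    linarith
  have hub : ∀ (h : Γ) (i : ℕ), (mi h i : ℝ) ≤ (i:ℝ) + nn h := by
    intro h i
    have t1 : nn (h * r i) ≤ nn h + nn (r i) := nn_mul hinv _ _
    rw [hnr i, ← hmival h i] at t1
    linarith
  -- eventual constancy of the Busemann cocycle
  have hconst : ∀ h : Γ, ∃ (I : ℕ) (β : ℝ), (∀ i, I ≤ i → (mi h i : ℝ) = i + β) ∧ |β| ≤ nn h := by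
    intro h
    set Hn := ⌈nn h⌉₊ with hHn
    have hHnr : nn h ≤ (Hn:ℝ) := Nat.le_ceil _
    set s : ℕ → ℕ := fun i => mi h i + Hn - i with hs
    have hge : ∀ i, i ≤ mi h i + Hn := by
      intro i
      have := hlb h i
      have : (i:ℝ) ≤ (mi h i : ℝ) + Hn := by linarith
      exact_mod_cast this
    have hsval : ∀ i, (s i : ℝ) = (mi h i : ℝ) + Hn - i := by
      intro i
      simp only [hs]
      push_cast [Nat.cast_sub (hge i)]
      ring
    have hsmono : ∀ i L, i ≤ L → s L ≤ s i := by
      intro i L hiL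
      have := hmono h i L hiL
      have : (s L : ℝ) ≤ (s i : ℝ) := by rw [hsval, hsval]; linarith
      exact_mod_cast this
    set μ := sInf (Set.range s) with hμ
    have hne : (Set.range s).Nonempty := ⟨s 0, 0, rfl⟩
    obtain ⟨I, hI⟩ := Nat.sInf_mem hne
    refine ⟨I, (μ:ℝ) - Hn, fun i hi => ?_, ?_⟩
    · have h1 : s i ≤ μ := by rw [hμ, ← hI]; exact hsmono I i hi
      have h2 : μ ≤ s i := Nat.sInf_le ⟨i, rfl⟩
      have h3 : s i = μ := le_antisymm h1 h2
      have := hsval i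
      rw [h3] at this
      linarith
    · have hμI : (μ:ℝ) = (mi h I : ℝ) + Hn - I := by rw [hμ, ← hI]; exact hsval I
      rw [abs_le]
      constructor
      · have := hub h I
        -- need -nn h ≤ μ - Hn i.e. μ ≥ Hn - nn h ... use lower bound? μ - Hn = mi - I ≥ -nn h
        have := hlb h I
        linarith
      · have := hub h I
        linarith
  choose Ifun βfun hIβ hβbound using hconst
  -- closeness to the ray
  have hclose : ∀ (h : Γ) (i : ℕ), Ifun h ≤ i →
      dist (h * r i) (r (mi h i)) ≤ 4*δ ∧ ((mi h i : ℕ):ℝ) = i + βfun h := by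
    intro h i hi
    have hval : ((mi h i : ℕ):ℝ) = i + βfun h := hIβ h i hi
    refine ⟨?_, hval⟩
    set m := mi h i with hm
    set d2 := ⌈2*δ⌉₊ with hd2
    have hd2r : 2*δ ≤ (d2:ℝ) := Nat.le_ceil _
    set J := m + d2 with hJ
    obtain ⟨L0, hL0⟩ := htr h J
    set L := max L0 (max (Ifun h) i) with hL
    have hLL0 : L0 ≤ L := le_max_left _ _
    have hLI : Ifun h ≤ L := le_trans (le_max_left _ _) (le_max_right _ _)
    have hLi : i ≤ L := le_trans (le_max_right _ _) (le_max_right _ _)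
    have hvL : ((mi h L : ℕ):ℝ) = L + βfun h := hIβ h L hLI
    -- gp (h r i) (h r L) = m
    have c1 : gp (h * r i) (h * r L) = (m:ℝ) := by
      unfold gp
      have d1 : dist 1 (h * r i) = (m:ℝ) := by rw [hmival h i]; rfl
      have d2' : dist 1 (h * r L) = (L:ℝ) + βfun h := by
        rw [← hvL]; exact (hmival h L).symm
      have d3 : dist (h * r i) (h * r L) = (L:ℝ) - i := by
        rw [hinv h (r i) (r L), hrd i L, abs_of_nonpos (by
          have : (i:ℝ) ≤ L := by exact_mod_cast hLi
          linarith)]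
        ring
      rw [d1, d2', d3]
      have : (m:ℝ) = i + βfun h := hval
      linarith
    have c2 : (J:ℝ) - 2*δ ≤ gp (h * r L) (r J) := hL0 L hLL0
    have hJm : (m:ℝ) ≤ (J:ℝ) - 2*δ := by
      have : (J:ℝ) = (m:ℝ) + d2 := by exact_mod_cast rfl
      linarith
    have s1 : (m:ℝ) - δ ≤ gp (h * r i) (r J) := by
      have chain := hhyp1 (h * r i) (h * r L) (r J)
      have hmin : (m:ℝ) ≤ min (gp (h * r i) (h * r L)) (gp (h * r L) (r J)) :=
        le_min (le_of_eq c1.symm) (by linarith)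
      linarith
    have s2 : (m:ℝ) - 2*δ ≤ gp (h * r i) (r m) := by
      have chain := hhyp1 (h * r i) (r J) (r m)
      have c3 : gp (r J) (r m) = (m:ℝ) := hgpr J m (by omega)
      have hmin : (m:ℝ) - δ ≤ min (gp (h * r i) (r J)) (gp (r J) (r m)) :=
        le_min s1 (by rw [c3]; linarith)
      linarith
    have df := dist_formula (h * r i) (r m)
    have hnnm : nn (h * r i) = (m:ℝ) := (hmival h i).symm
    rw [hnnm, hnr m] at df
    linarith
  -- quasimorphism property
  have hqm : ∀ g h : Γ, |βfun (g * h) - βfun g - βfun h| ≤ 12*δ := by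
    intro g h
    set i := max (Ifun (g*h)) (max (Ifun h) (Ifun g + ⌈nn h⌉₊)) with hi
    have hi1 : Ifun (g*h) ≤ i := le_max_left _ _
    have hi2 : Ifun h ≤ i := le_trans (le_max_left _ _) (le_max_right _ _)
    have hi3 : Ifun g + ⌈nn h⌉₊ ≤ i := le_trans (le_max_right _ _) (le_max_right _ _)
    obtain ⟨d1, v1⟩ := hclose (g*h) i hi1
    obtain ⟨d2, v2⟩ := hclose h i hi2
    set j := mi h i with hj
    have hjI : Ifun g ≤ j := by
      have : ((Ifun g + ⌈nn h⌉₊ : ℕ):ℝ) ≤ i := by exact_mod_cast hi3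
      have h2 : nn h ≤ (⌈nn h⌉₊:ℝ) := Nat.le_ceil _
      have h3 : (i:ℝ) - nn h ≤ (j:ℝ) := hlb h i
      have : (Ifun g : ℝ) ≤ j := by push_cast at this ⊢; linarith
      exact_mod_cast this
    obtain ⟨d3, v3⟩ := hclose g j hjI
    have d2' : dist (g * (h * r i)) (g * r j) ≤ 4*δ := by
      rw [hinv g (h * r i) (r j)]
      exact d2
    have hassoc : (g * h) * r i = g * (h * r i) := by rw [mul_assoc]
    rw [hassoc] at d1
    have t1 : dist (r (mi (g*h) i)) (r (mi g j)) ≤ 12*δ := by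
      have a1 := dist_triangle (r (mi (g*h) i)) (g * (h * r i)) (r (mi g j))
      have a2 := dist_triangle (g * (h * r i)) (g * r j) (r (mi g j))
      have a3 : dist (r (mi (g*h) i)) (g * (h * r i)) = dist (g * (h * r i)) (r (mi (g*h) i)) :=
        dist_comm _ _
      linarith
    rw [hrd] at t1
    rw [v1, v3, v2] at t1
    rw [abs_le] at t1 ⊢
    constructor <;> [linarith [t1.1, t1.2]; linarith [t1.1, t1.2]]
  -- β of the identity, inverses, conjugates
  have hβ1 : βfun (1:Γ) = 0 := by
    have := hIβ (1:Γ) (Ifun 1) le_rfl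
    have e : nn ((1:Γ) * r (Ifun 1)) = (Ifun 1 : ℝ) := by rw [one_mul]; exact hnr _
    rw [hmival 1 (Ifun 1)] at this
    rw [e] at this
    linarith
  have hβinv : ∀ x : Γ, |βfun x⁻¹ + βfun x| ≤ 12*δ := by
    intro x
    have := hqm x⁻¹ x
    rw [inv_mul_cancel, hβ1] at this
    have e : |(0:ℝ) - βfun x⁻¹ - βfun x| = |βfun x⁻¹ + βfun x| := by
      rw [show (0:ℝ) - βfun x⁻¹ - βfun x = -(βfun x⁻¹ + βfun x) by ring, abs_neg]
    rw [e] at this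
    exact this
  have hβconj : ∀ w t : Γ, |βfun (w * t * w⁻¹)| ≤ |βfun t| + 36*δ := by
    intro w t
    have q1 := hqm (w*t) w⁻¹
    have q2 := hqm w t
    have q3 := hβinv w
    rw [abs_le] at q1 q2 q3 ⊢
    constructor
    · linarith [neg_abs_le (βfun t)]
    · linarith [le_abs_self (βfun t)]
  -- the family of conjugates
  set hh : ℕ → Γ := fun n => v^(2*n) * u * (v^(2*n))⁻¹ with hhh
  set C₂ : ℝ := 4*δ + (|βfun u| + 36*δ) with hC₂
  have hfar : ∀ n : ℕ, ∀ i : ℕ, Ifun (hh n) ≤ i → dist (hh n * r i) (r i) ≤ C₂ := by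
    intro n i hi
    obtain ⟨d1, v1⟩ := hclose (hh n) i hi
    have t1 := dist_triangle (hh n * r i) (r (mi (hh n) i)) (r i)
    have t2 : dist (r (mi (hh n) i)) (r i) = |βfun (hh n)| := by
      rw [hrd, v1]
      congr 1
      ring
    have t3 : |βfun (hh n)| ≤ |βfun u| + 36*δ := hβconj (v^(2*n)) u
    linarith
  -- finite ball and pigeonhole
  have hBfin : {y : Γ | dist 1 y ≤ C₂}.Finite := ball_finite hdisc 1 C₂
  set F := hBfin.toFinset with hF
  set P := F.card with hP
  set i := (Finset.range (P+1)).sup (fun n => Ifun (hh n)) with hi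
  have hmap : ∀ n ∈ Finset.range (P+1), (r i)⁻¹ * (hh n * r i) ∈ F := by
    intro n hn
    have hIn : Ifun (hh n) ≤ i := Finset.le_sup (f := fun n => Ifun (hh n)) hn
    have := hfar n i hIn
    rw [hF, Set.Finite.mem_toFinset]
    show nn ((r i)⁻¹ * (hh n * r i)) ≤ C₂
    rw [← dist_eq hinv]
    rw [dist_comm]
    exact this
  have hcard : F.card < (Finset.range (P+1)).card := by
    rw [Finset.card_range]
    omega
  obtain ⟨n, hn, m, hm, hnm, heq⟩ :=
    Finset.exists_ne_map_eq_of_card_lt_of_maps_to hcard hmap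
  have : hh n = hh m := by
    have h1 : hh n * r i = hh m * r i := mul_left_cancel heq
    exact mul_right_cancel h1
  exact free_family_ne u v hfree hnm this

end caseF
end CT


/-- If `Γ` is a non-elementary hyperbolic group and `(γ n)` is a
sequence of distinct elements of `Γ`, then there is `h ∈ Γ` such that the translation
lengths `l_S([γ n, h])` of the commutators are unbounded. -/
theorem commutator_translation_lengths_unbounded
    {Γ : Type*} [Group Γ] [MetricSpace Γ] [ProperSpace Γ]
    (hinv : ∀ g x y : Γ, dist (g * x) (g * y) = dist x y)
    (hdisc : ∀ x y : Γ, x ≠ y → 1 ≤ dist x y)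
    (δS : ℝ) (hδS : 0 ≤ δS)
    (hhyp : ∀ w x y z : Γ,
      min ((dist x w + dist y w - dist x y) / 2) ((dist y w + dist z w - dist y z) / 2) - δS ≤
        (dist x w + dist z w - dist x z) / 2)
    (hgeo : ∀ x y : Γ, ∃ (n : ℕ) (p : ℕ → Γ), (n : ℝ) = dist x y ∧ p 0 = x ∧ p n = y ∧
      ∀ i ≤ n, ∀ j ≤ n, dist (p i) (p j) = |(i : ℝ) - (j : ℝ)|)
    (hnonelem : ∃ u v : Γ, ∀ w : FreeGroup Bool, w ≠ 1 →
      FreeGroup.lift (fun c => if c then u else v) w ≠ 1)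
    (γseq : ℕ → Γ) (hdistinct : Function.Injective γseq) :
    ∃ h : Γ, ∀ M : ℝ, ∃ n : ℕ,
      M ≤ ⨅ g : Γ, dist g ((γseq n * h * (γseq n)⁻¹ * h⁻¹) * g) := by
  classical
  obtain ⟨u, v, hfree⟩ := hnonelem
  have hhyp1 : ∀ x y z : Γ, min (CT.gp x y) (CT.gp y z) - δS ≤ CT.gp x z := by
    intro x y z
    have h := hhyp 1 x y z
    unfold CT.gp
    rw [dist_comm 1 x, dist_comm 1 y, dist_comm 1 z]
    exact h
  obtain ⟨φ, r, r', hrd, hr'd, hra, hr'a, hlen, hr0, hr'0⟩ :=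
    CT.extraction hinv hdisc hgeo γseq hdistinct
  set a : ℕ → Γ := fun k => γseq (φ k) with ha
  set a' : ℕ → Γ := fun k => (a k)⁻¹ with ha'
  have q1 : ∀ k l : ℕ, min (k:ℝ) (l:ℝ) - δS ≤ CT.gp (a k) (a l) := by
    intro k l
    set m := min k l with hm
    have c1 : CT.gp (a k) (r m) = m := by
      rw [CT.gp_symm]; exact hra m k (min_le_left k l)
    have c2 : CT.gp (r m) (a l) = m := hra m l (min_le_right k l)
    have chain := hhyp1 (a k) (r m) (a l)
    rw [c1, c2, min_self] at chain
    have hcast : ((m:ℕ):ℝ) = min (k:ℝ) (l:ℝ) := by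
      rw [hm]
      push_cast
      rfl
    linarith [hcast ▸ chain]
  have q2 : ∀ k l : ℕ, min (k:ℝ) (l:ℝ) - δS ≤ CT.gp (a' k) (a' l) := by
    intro k l
    set m := min k l with hm
    have c1 : CT.gp (a' k) (r' m) = m := by
      rw [CT.gp_symm]; exact hr'a m k (min_le_left k l)
    have c2 : CT.gp (r' m) (a' l) = m := hr'a m l (min_le_right k l)
    have chain := hhyp1 (a' k) (r' m) (a' l)
    rw [c1, c2, min_self] at chain
    have hcast : ((m:ℕ):ℝ) = min (k:ℝ) (l:ℝ) := by
      rw [hm]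
      push_cast
      rfl
    linarith [hcast ▸ chain]
  by_cases hsplit : ∃ h : Γ, ¬ CT.Sp a h ∧ ¬ CT.Sp a' h
  · obtain ⟨h, hp, hm⟩ := hsplit
    obtain ⟨Kp, Np, hKp0, hKp⟩ := CT.not_Sp hinv δS hδS hhyp1 q1 hp
    obtain ⟨Km, Nm, hKm0, hKm⟩ := CT.not_Sp hinv δS hδS hhyp1 q2 hm
    refine ⟨h, fun M => ?_⟩
    obtain ⟨k, hk⟩ := CT.estimateE hinv δS hδS hhyp1 a hlen h (max Kp Km)
      (le_trans hKp0 (le_max_left _ _)) (max Np Nm)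
      (fun k hk => le_trans
        (hKp k k (le_trans (le_max_left _ _) hk) (le_trans (le_max_left _ _) hk))
        (le_max_left _ _))
      (fun k hk => le_trans
        (hKm k k (le_trans (le_max_right _ _) hk) (le_trans (le_max_right _ _) hk))
        (le_max_right _ _))
      M
    exact ⟨φ k, hk⟩
  · have hdich : ∀ h : Γ, CT.Sp a h ∨ CT.Sp a' h := by
      intro h
      by_cases h1 : CT.Sp a h
      · exact Or.inl h1
      · by_cases h2 : CT.Sp a' h
        · exact Or.inr h2
        · exact absurd ⟨h, h1, h2⟩ hsplit
    exfalso
    by_cases hallp : ∀ h : Γ, CT.Sp a h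
    · exact CT.caseF hinv hdisc δS hδS hhyp1 hgeo u v hfree a r hr0 hrd hra hallp
    · push_neg at hallp
      obtain ⟨x, hx⟩ := hallp
      have hxm : CT.Sp a' x := (hdich x).resolve_left hx
      by_cases hallm : ∀ h : Γ, CT.Sp a' h
      · exact CT.caseF hinv hdisc δS hδS hhyp1 hgeo u v hfree a' r' hr'0 hr'd hr'a hallm
      · push_neg at hallm
        obtain ⟨y, hy⟩ := hallm
        have hyp' : CT.Sp a y := (hdich y).resolve_right hy
        rcases hdich (x*y) with hxy | hxy
        · have hbad : CT.Sp a ((x*y)*y⁻¹) :=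
            CT.Sp_mul hinv δS hδS hhyp1 hxy (CT.Sp_inv hinv δS hδS hhyp1 hyp')
          rw [mul_inv_cancel_right] at hbad
          exact hx hbad
        · have hbad : CT.Sp a' (x⁻¹*(x*y)) :=
            CT.Sp_mul hinv δS hδS hhyp1 (CT.Sp_inv hinv δS hδS hhyp1 hxm) hxy
          rw [inv_mul_cancel_left] at hbad
          exact hy hbad
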